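/- For all single-qubit Pauli matrices P₁, P₂ ∈ {X, Y, Z}, the single-qubit trap with Pauli errors in two neighboring bands satisfies (1/2) ∑_{t ∈ {0,1}} (1/4) ∑_{V ∈ {H,S}} ∑_{V' ∈ {H,S}} |⟨+| H^t · V'† · P₂ · V' · V† · P₁ · V · H^t |+⟩|² ≤ 3/4, where ⟨+| M |+⟩ denotes (conjugate-transpose of |+⟩) · M · |+⟩ for a 2 × 2 matrix M. (Two-band errors of class 3 in neighboring bands are detected with probability at least 1/4; single-qubit case.) -/

import Mathlib

open Matrix

/-- The Pauli matrix `X`. -/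
noncomputable def Xm : Matrix (Fin 2) (Fin 2) ℂ := !![0, 1; 1, 0]

/-- The Pauli matrix `Y`. -/
noncomputable def Ym : Matrix (Fin 2) (Fin 2) ℂ := !![0, -Complex.I; Complex.I, 0]

/-- The Pauli matrix `Z`. -/
noncomputable def Zm : Matrix (Fin 2) (Fin 2) ℂ := !![1, 0; 0, -1]

/-- The Hadamard matrix `H = (1/√2)!![1,1;1,-1]`. -/
noncomputable def Hm : Matrix (Fin 2) (Fin 2) ℂ :=
  (1 / ((Real.sqrt 2 : ℝ) : ℂ)) • !![1, 1; 1, -1]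

/-- The phase matrix `S = diag(1, i)`. -/
noncomputable def Sm : Matrix (Fin 2) (Fin 2) ℂ := !![1, 0; 0, Complex.I]

/-- The single-qubit state `|+⟩ = (1/√2)(1,1)`. -/
noncomputable def plus1 : Fin 2 → ℂ := fun _ => 1 / ((Real.sqrt 2 : ℝ) : ℂ)

/-- The matrix element `⟨+| M |+⟩` for a 2 × 2 matrix `M`. -/
noncomputable def plusBraket1 (M : Matrix (Fin 2) (Fin 2) ℂ) : ℂ :=
  ∑ x, ∑ y, star (plus1 x) * M x y * plus1 y

set_option maxHeartbeats 4000000 in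
/-- **Class-3 two-band errors in neighboring bands, single-qubit case.**
For all `P₁, P₂ ∈ {X, Y, Z}`,
`(1/2) ∑_{t∈{0,1}} (1/4) ∑_{V,V'∈{H,S}} |⟨+| H^t V'† P₂ V' V† P₁ V H^t |+⟩|² ≤ 3/4`. -/
theorem class3_neighboring_bands_single_qubit
    (P₁ P₂ : Matrix (Fin 2) (Fin 2) ℂ)
    (hP₁ : P₁ = Xm ∨ P₁ = Ym ∨ P₁ = Zm) (hP₂ : P₂ = Xm ∨ P₂ = Ym ∨ P₂ = Zm) :
    (1 / 2 : ℝ) * ∑ t : Fin 2, (1 / 4) * ∑ v : Fin 2, ∑ v' : Fin 2,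
        ‖plusBraket1
          (Hm ^ (t : ℕ) * (![Hm, Sm] v')ᴴ * P₂ * ![Hm, Sm] v' * (![Hm, Sm] v)ᴴ *
            P₁ * ![Hm, Sm] v * Hm ^ (t : ℕ))‖ ^ 2
      ≤ 3 / 4 := by
  have h2 : Real.sqrt 2 ^ 2 = 2 := Real.sq_sqrt (by norm_num)
  have h0 : Real.sqrt 2 ≠ 0 := by positivity
  have h4 : Real.sqrt 2 ^ 4 = 4 := by rw [(by ring : Real.sqrt 2 ^ 4 = (Real.sqrt 2 ^ 2) ^ 2), h2]; norm_num
  have h6 : Real.sqrt 2 ^ 6 = 8 := by rw [(by ring : Real.sqrt 2 ^ 6 = (Real.sqrt 2 ^ 2) ^ 3), h2]; norm_num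
  have h8 : Real.sqrt 2 ^ 8 = 16 := by rw [(by ring : Real.sqrt 2 ^ 8 = (Real.sqrt 2 ^ 2) ^ 4), h2]; norm_num
  have h10 : Real.sqrt 2 ^ 10 = 32 := by rw [(by ring : Real.sqrt 2 ^ 10 = (Real.sqrt 2 ^ 2) ^ 5), h2]; norm_num
  have h12 : Real.sqrt 2 ^ 12 = 64 := by rw [(by ring : Real.sqrt 2 ^ 12 = (Real.sqrt 2 ^ 2) ^ 6), h2]; norm_num
  have h14 : Real.sqrt 2 ^ 14 = 128 := by rw [(by ring : Real.sqrt 2 ^ 14 = (Real.sqrt 2 ^ 2) ^ 7), h2]; norm_num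
  have h16 : Real.sqrt 2 ^ 16 = 256 := by rw [(by ring : Real.sqrt 2 ^ 16 = (Real.sqrt 2 ^ 2) ^ 8), h2]; norm_num
  rcases hP₁ with rfl | rfl | rfl <;> rcases hP₂ with rfl | rfl | rfl <;>
  · simp only [Fin.sum_univ_two, Fin.isValue, Matrix.cons_val_zero, Matrix.cons_val_one,
      Matrix.head_cons, Fin.val_zero, Fin.val_one, pow_zero, pow_one, Complex.sq_norm]
    simp only [plusBraket1, plus1, Hm, Sm, Xm, Ym, Zm, Matrix.mul_apply,
      Matrix.conjTranspose_apply, Fin.sum_univ_two, Matrix.smul_apply, Matrix.one_apply,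
      Matrix.cons_val', Matrix.cons_val_zero, Matrix.cons_val_one, Matrix.head_cons,
      Matrix.empty_val', Matrix.cons_val_fin_one, Matrix.head_fin_const, smul_eq_mul,
      star_mul', _root_.map_one, Complex.normSq_apply]
    norm_num [Complex.normSq_apply, Complex.ext_iff, Complex.div_re, Complex.div_im, h2, h0]
    ring_nf
    norm_num [h2, h4, h6, h8, h10, h12, h14, h16]
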